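/- Let l ≥ 0 be an integer and define u_{l,l,β} = C(0, l-2β) + 2·∑_{k=1}^{l} (-1)^k C(0, l-k-2β) for 0 ≤ β ≤ l, where C(0,c) = 1 if c = 0 and 0 otherwise. Then ∑_{β=0}^{l} u_{l,l,β} · C(l, β) = (-2)^l. -/
import Mathlib


/-- Binomial coefficient `C a b` for integers, with the convention that
`C a b = 0` whenever `b < 0` or `b > a`. In particular `C 0 c = 1` iff `c = 0`. -/
def intChoose (a b : ℤ) : ℤ :=
  if 0 ≤ b ∧ b ≤ a then (a.toNat.choose b.toNat : ℤ) else 0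

/-- `u_{l,l,β} = C(0, l-2β) + 2·∑_{k=1}^{l} (-1)^k C(0, l-k-2β)`. -/
def uLLB (l β : ℕ) : ℤ :=
  intChoose 0 ((l : ℤ) - 2 * β) +
    2 * ∑ k ∈ Finset.Icc 1 l,
      (-1 : ℤ) ^ k * intChoose 0 ((l : ℤ) - k - 2 * β)

lemma intChoose_zero (c : ℤ) : intChoose 0 c = if c = 0 then 1 else 0 := by
  unfold intChoose
  rcases eq_or_ne c 0 with h | h <;> simp [h]
  omega

lemma uLLB_eq (l β : ℕ) :
    uLLB l β = if l = 2*β then 1 else if 2*β < l then 2*(-1:ℤ)^l else 0 := by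
  unfold uLLB
  simp only [intChoose_zero]
  rcases lt_trichotomy (2*β) l with h | h | h
  · rw [Finset.sum_eq_single (l - 2*β)]
    · have h1 : ¬ ((l:ℤ) - 2*β = 0) := by push_cast; omega
      have h2 : ((l:ℤ) - (l - 2*β : ℕ) - 2*β = 0) := by push_cast [Nat.cast_sub (by omega : 2*β ≤ l)]; ring
      simp only [h1, if_false, h2, if_true, if_pos]
      have : (-1:ℤ)^(l - 2*β) = (-1)^l := by
        have : (-1:ℤ)^(l - 2*β) * (-1)^(2*β) = (-1)^l := by
          rw [← pow_add, Nat.sub_add_cancel (by omega)]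
        simpa [pow_mul] using this
      rw [this]
      simp [h, Nat.ne_of_gt h]
    · intro k hk hne
      have : ¬ ((l:ℤ) - k - 2*β = 0) := by
        simp only [Finset.mem_Icc] at hk
        omega
      simp [this]
    · intro h'
      simp only [Finset.mem_Icc] at h'
      omega
  · have h1 : ((l:ℤ) - 2*β = 0) := by push_cast; omega
    have : ∀ k ∈ Finset.Icc 1 l, (-1:ℤ)^k * (if (l:ℤ) - k - 2*β = 0 then 1 else 0) = 0 := by
      intro k hk
      simp only [Finset.mem_Icc] at hk
      have : ¬ ((l:ℤ) - k - 2*β = 0) := by omega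
      simp [this]
    rw [Finset.sum_congr rfl this]
    simp [h1, h.symm]
  · have h1 : ¬ ((l:ℤ) - 2*β = 0) := by push_cast; omega
    have : ∀ k ∈ Finset.Icc 1 l, (-1:ℤ)^k * (if (l:ℤ) - k - 2*β = 0 then 1 else 0) = 0 := by
      intro k hk
      simp only [Finset.mem_Icc] at hk
      have : ¬ ((l:ℤ) - k - 2*β = 0) := by omega
      simp [this]
    rw [Finset.sum_congr rfl this]
    simp [h1]
    omega

lemma even_half_sum (m : ℕ) :
    (2*m).choose m + 2 * ∑ β ∈ Finset.range m, (2*m).choose β = 4^m := by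
  have key : ∑ i ∈ Finset.Ico (m+1) (2*m+1), (2*m).choose i
      = ∑ i ∈ Finset.range m, (2*m).choose i := by
    rw [Finset.sum_Ico_eq_sum_range]
    have hm : 2*m+1 - (m+1) = m := by omega
    rw [hm, ← Finset.sum_range_reflect (fun i => (2*m).choose (m+1+i)) m]
    apply Finset.sum_congr rfl
    intro i hi
    simp only [Finset.mem_range] at hi
    have h1 : m + 1 + (m - 1 - i) = 2*m - i := by omega
    rw [h1, Nat.choose_symm (by omega)]
  have split : ∑ i ∈ Finset.range (m+1), (2*m).choose i
      + ∑ i ∈ Finset.Ico (m+1) (2*m+1), (2*m).choose i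
      = ∑ i ∈ Finset.range (2*m+1), (2*m).choose i := by
    simp only [Finset.range_eq_Ico]
    exact Finset.sum_Ico_consecutive _ (by omega) (by omega)
  have total : ∑ i ∈ Finset.range (2*m+1), (2*m).choose i = 4^m := by
    rw [Nat.sum_range_choose, pow_mul]
    norm_num
  rw [Finset.sum_range_succ, key, total] at split
  omega

theorem stmt6 (l : ℕ) :
    ∑ β ∈ Finset.range (l + 1), uLLB l β * (l.choose β : ℤ) = (-2 : ℤ) ^ l := by
  simp only [uLLB_eq]
  rcases Nat.even_or_odd l with ⟨m, hm⟩ | ⟨m, hm⟩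
  · subst hm
    have hmm : m + m = 2*m := by omega
    rw [hmm]
    have hsub : Finset.range (m+1) ⊆ Finset.range (2*m+1) := by
      apply Finset.range_subset_range.mpr; omega
    rw [← Finset.sum_subset hsub ?_]
    · rw [Finset.sum_range_succ]
      have hmid : ((if 2*m = 2*m then (1:ℤ) else if 2*m < 2*m then 2*(-1)^(2*m) else 0)
          * ((2*m).choose m : ℤ)) = ((2*m).choose m : ℤ) := by simp
      rw [hmid]
      have hterm : ∀ β ∈ Finset.range m,
          (if 2*m = 2*β then (1:ℤ) else if 2*β < 2*m then 2*(-1)^(2*m) else 0)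
            * ((2*m).choose β : ℤ) = 2 * ((2*m).choose β : ℤ) := by
        intro β hβ
        simp only [Finset.mem_range] at hβ
        have h1 : ¬ (2*m = 2*β) := by omega
        have h2 : 2*β < 2*m := by omega
        simp [h1, h2, pow_mul]
      rw [Finset.sum_congr rfl hterm, ← Finset.mul_sum, ← Nat.cast_sum]
      have hc : ((2*m).choose m : ℤ)
          + 2 * ((∑ β ∈ Finset.range m, (2*m).choose β : ℕ) : ℤ) = 4^m := by
        exact_mod_cast even_half_sum m
      have h4 : ((-2:ℤ))^(2*m) = 4^m := by rw [pow_mul]; norm_num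
      rw [h4]
      linarith
    · intro x hx hx'
      simp only [Finset.mem_range] at hx hx'
      have h1 : ¬ (2*m = 2*x) := by omega
      have h2 : ¬ (2*x < 2*m) := by omega
      simp [h1, h2]
  · subst hm
    have hsub : Finset.range (m+1) ⊆ Finset.range (2*m+1+1) := by
      apply Finset.range_subset_range.mpr; omega
    rw [← Finset.sum_subset hsub ?_]
    · have : ∀ β ∈ Finset.range (m+1),
          (if 2*m+1 = 2*β then (1:ℤ) else if 2*β < 2*m+1 then 2*(-1)^(2*m+1) else 0)
            * ((2*m+1).choose β : ℤ) = -2 * ((2*m+1).choose β : ℤ) := by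
        intro β hβ
        simp only [Finset.mem_range] at hβ
        have h1 : ¬ (2*m+1 = 2*β) := by omega
        have h2 : 2*β < 2*m+1 := by omega
        simp [h1, h2, pow_succ, pow_mul]
      rw [Finset.sum_congr rfl this, ← Finset.mul_sum, ← Nat.cast_sum,
        Nat.sum_range_choose_halfway]
      have : ((-2:ℤ))^(2*m+1) = -2 * 4^m := by
        rw [pow_succ, pow_mul]; ring_nf
      rw [this]
      push_cast
      ring
    · intro x hx hx'
      simp only [Finset.mem_range] at hx hx'
      have h1 : ¬ (2*m+1 = 2*x) := by omega
      have h2 : ¬ (2*x < 2*m+1) := by omega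
      simp [h1, h2]
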